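/- Let f : ℝ → ℝ be continuous on [0,1]. Then the hyperreal represented by the sequence of Riemann sums n ↦ (1/n) Σ_{k=0}^{n-1} f(k/n) is finite, and its standard part equals the integral ∫₀¹ f(t) dt. -/

import Mathlib

open MeasureTheory Filter Set Topology intervalIntegral

noncomputable def stepF (f : ℝ → ℝ) (n : ℕ) (t : ℝ) : ℝ := f ((⌊(n : ℝ) * t⌋ : ℤ) / (n : ℝ))

lemma stepF_meas (f : ℝ → ℝ) (n : ℕ) : Measurable (stepF f n) := by
  have : stepF f n = (fun m : ℤ => f ((m : ℝ) / n)) ∘ (fun t : ℝ => ⌊(n : ℝ) * t⌋) := rfl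
  rw [this]
  exact (measurable_from_top).comp (Int.measurable_floor.comp (measurable_const.mul measurable_id))

lemma stepF_integral (f : ℝ → ℝ) {n : ℕ} (hn : 1 ≤ n) :
    ∫ t in (0:ℝ)..1, stepF f n t = (1 / (n : ℝ)) * ∑ k ∈ Finset.range n, f ((k : ℝ) / n) := by
  have hn' : (0:ℝ) < n := by exact_mod_cast hn
  set a : ℕ → ℝ := fun k => k / n with ha
  have key : ∀ k, k < n → (∀ᵐ t, t ∈ Ioc (a k) (a (k+1)) → stepF f n t = f ((k:ℝ)/n)) := by
    intro k _
    have hnull : (volume : Measure ℝ) {(a (k+1))} = 0 := measure_singleton _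
    filter_upwards [compl_mem_ae_iff.2 hnull] with t ht hmem
    have htne : t ≠ a (k+1) := ht
    have h1 : (k : ℝ) < n * t := by
      have := hmem.1
      rw [ha] at this
      calc (k:ℝ) = n * ((k:ℝ)/n) := by field_simp
        _ < n * t := by exact mul_lt_mul_of_pos_left this hn'
    have h2 : n * t < (k:ℝ) + 1 := by
      have hle := hmem.2
      have hlt : t < a (k+1) := lt_of_le_of_ne hle htne
      rw [ha] at hlt
      have := mul_lt_mul_of_pos_left hlt hn'
      calc (n:ℝ) * t < n * (((k:ℕ)+1 : ℕ) / n) := by exact_mod_cast this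
        _ = (k:ℝ) + 1 := by push_cast; field_simp
    have hfloor : ⌊(n:ℝ) * t⌋ = (k : ℤ) := by
      rw [Int.floor_eq_iff]
      constructor
      · push_cast; linarith
      · push_cast; linarith
    simp [stepF, hfloor]
  have hle : ∀ k : ℕ, a k ≤ a (k+1) := by
    intro k
    show (k:ℝ)/(n:ℝ) ≤ ((k+1 : ℕ):ℝ)/(n:ℝ)
    gcongr
    exact_mod_cast Nat.le_succ k
  have hae : ∀ k, k < n → (stepF f n) =ᵐ[volume.restrict (Ioc (a k) (a (k+1)))]
      (fun _ => f ((k:ℝ)/n)) := by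
    intro k hk
    exact (ae_restrict_iff' measurableSet_Ioc).2 (key k hk)
  have hint : ∀ k, k < n → IntervalIntegrable (stepF f n) volume (a k) (a (k+1)) := by
    intro k hk
    rw [intervalIntegrable_iff_integrableOn_Ioc_of_le (hle k)]
    exact (integrableOn_const measure_Ioc_lt_top.ne).congr (hae k hk).symm
  have heq : ∀ k ∈ Finset.range n, ∫ t in a k..a (k+1), stepF f n t = f ((k:ℝ)/n) * (1/n) := by
    intro k hk
    rw [Finset.mem_range] at hk
    rw [integral_of_le (hle k), setIntegral_congr_ae measurableSet_Ioc (key k hk),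
      setIntegral_const, measureReal_def, Real.volume_Ioc]
    have : a (k+1) - a k = 1 / n := by
      rw [ha]; push_cast; field_simp; ring
    rw [this, ENNReal.toReal_ofReal (by positivity), smul_eq_mul]
    try ring
  have hsum := intervalIntegral.sum_integral_adjacent_intervals hint
  have h0 : a 0 = 0 := by simp [ha]
  have h1 : a n = 1 := by rw [ha]; field_simp
  rw [h0, h1] at hsum
  rw [← hsum, Finset.sum_congr rfl heq, Finset.mul_sum]
  exact Finset.sum_congr rfl fun k _ => mul_comm _ _

lemma stepF_arg_mem {n : ℕ} {t : ℝ} (ht : t ∈ Ioc (0:ℝ) 1) :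
    ((⌊(n:ℝ) * t⌋ : ℤ) : ℝ) / n ∈ Icc (0:ℝ) 1 := by
  rcases Nat.eq_zero_or_pos n with rfl | hn
  · simp
  have hn' : (0:ℝ) < n := by exact_mod_cast hn
  have h0 : (0:ℤ) ≤ ⌊(n:ℝ) * t⌋ := Int.floor_nonneg.2 (mul_nonneg (Nat.cast_nonneg n) ht.1.le)
  have h1 : ((⌊(n:ℝ) * t⌋ : ℤ) : ℝ) ≤ n * t := Int.floor_le _
  constructor
  · positivity
  · rw [div_le_one hn']
    calc ((⌊(n:ℝ) * t⌋ : ℤ) : ℝ) ≤ n * t := h1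
      _ ≤ n * 1 := by nlinarith [ht.2]
      _ = n := mul_one _

lemma stepF_tendsto (f : ℝ → ℝ) (hf : ContinuousOn f (Icc (0:ℝ) 1)) {t : ℝ}
    (ht : t ∈ Ioc (0:ℝ) 1) :
    Tendsto (fun n : ℕ => stepF f n t) atTop (𝓝 (f t)) := by
  have ht' : t ∈ Icc (0:ℝ) 1 := Ioc_subset_Icc_self ht
  have hg : Tendsto (fun n : ℕ => ((⌊(n:ℝ) * t⌋ : ℤ) : ℝ) / n) atTop (𝓝 t) := by
    have hlo : Tendsto (fun n : ℕ => t - 1 / (n:ℝ)) atTop (𝓝 t) := by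
      simpa using tendsto_const_nhds.sub (tendsto_one_div_atTop_nhds_zero_nat (𝕜 := ℝ))
    apply tendsto_of_tendsto_of_tendsto_of_le_of_le' hlo tendsto_const_nhds
    · filter_upwards [eventually_ge_atTop 1] with n hn
      have hn' : (0:ℝ) < n := by exact_mod_cast hn
      have : (n:ℝ) * t - 1 < ((⌊(n:ℝ) * t⌋ : ℤ) : ℝ) := Int.sub_one_lt_floor _
      rw [sub_le_iff_le_add, ← add_div, le_div_iff₀ hn']
      nlinarith
    · filter_upwards [eventually_ge_atTop 1] with n hn
      have hn' : (0:ℝ) < n := by exact_mod_cast hn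
      rw [div_le_iff₀ hn']
      calc ((⌊(n:ℝ) * t⌋ : ℤ) : ℝ) ≤ n * t := Int.floor_le _
        _ = t * n := mul_comm _ _
  have hmem : ∀ᶠ n : ℕ in atTop, ((⌊(n:ℝ) * t⌋ : ℤ) : ℝ) / n ∈ Icc (0:ℝ) 1 :=
    Eventually.of_forall fun n => stepF_arg_mem ht
  exact (hf t ht').tendsto.comp (tendsto_nhdsWithin_iff.2 ⟨hg, hmem⟩)

lemma tendsto_riemann_sum (f : ℝ → ℝ) (hf : ContinuousOn f (Icc (0:ℝ) 1)) :
    Tendsto (fun n : ℕ => (1 / (n : ℝ)) * ∑ k ∈ Finset.range n, f ((k : ℝ) / (n : ℝ)))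
      atTop (𝓝 (∫ t in (0:ℝ)..1, f t)) := by
  obtain ⟨C, hC⟩ := (isCompact_Icc (a := (0:ℝ)) (b := 1)).exists_bound_of_continuousOn hf
  have hdct := tendsto_integral_of_dominated_convergence (μ := volume.restrict (Ioc (0:ℝ) 1))
    (F := stepF f) (f := f) (bound := fun _ => C)
    (fun n => (stepF_meas f n).aestronglyMeasurable)
    (integrable_const C)
    (fun n => (ae_restrict_iff' measurableSet_Ioc).2 (Eventually.of_forall fun t ht =>
      hC _ (stepF_arg_mem ht)))
    ((ae_restrict_iff' measurableSet_Ioc).2 (Eventually.of_forall fun t ht =>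
      stepF_tendsto f hf ht))
  rw [intervalIntegral.integral_of_le (zero_le_one' ℝ)]
  apply hdct.congr'
  filter_upwards [eventually_ge_atTop 1] with n hn
  rw [← intervalIntegral.integral_of_le (zero_le_one' ℝ), stepF_integral f hn]


open Hyperreal

/-- For `f` continuous on `[0,1]`, the hyperreal given by the sequence of Riemann sums
`n ↦ (1/n) Σ_{k<n} f(k/n)` is finite, and its standard part is `∫₀¹ f`. -/
theorem st_riemann_sum_eq_integral (f : ℝ → ℝ)
    (hf : ContinuousOn f (Set.Icc (0 : ℝ) 1)) :
    ¬ (Hyperreal.ofSeq fun n : ℕ =>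
        (1 / (n : ℝ)) * ∑ k ∈ Finset.range n, f ((k : ℝ) / (n : ℝ))).Infinite ∧
    Hyperreal.st (Hyperreal.ofSeq fun n : ℕ =>
        (1 / (n : ℝ)) * ∑ k ∈ Finset.range n, f ((k : ℝ) / (n : ℝ)))
      = ∫ t in (0 : ℝ)..1, f t := by
  have h := Hyperreal.isSt_of_tendsto (tendsto_riemann_sum f hf)
  exact ⟨h.not_infinite, h.st_eq⟩
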